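/- arXiv:1504.01492 — 7 statements merged into one kernel-verified Lean document; each statement's English description precedes it below -/
import Mathlib

section
/- Let F be a set of n×n real symmetric positive semidefinite matrices, each having trace exactly η > 0, let A be an n×n real symmetric matrix, and let γ > 0. Define p(Y) = ⟨Y, A⟩ and p_γ(Y) = p(Y) + (1/(2γ))(‖Y‖_F² − η²). If Y⋆ ∈ F satisfies p(Y⋆) ≤ p(Y) for all Y ∈ F, and Y_γ ∈ F satisfies p_γ(Y_γ) ≤ p_γ(Y) for all Y ∈ F, then 0 ≤ p(Y_γ) − p(Y⋆) ≤ η²/(2γ). -/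
open Matrix

lemma psd_entry_sq_le {n : ℕ} {Y : Matrix (Fin n) (Fin n) ℝ} (hY : Y.PosSemidef)
    (i j : Fin n) : Y i j * Y i j ≤ Y i i * Y j j := by
  have hsym : Y j i = Y i j := by
    have := hY.1
    rw [Matrix.IsHermitian] at this
    calc Y j i = Yᵀ i j := rfl
    _ = Y i j := by rw [show Yᵀ = Y from by simpa using this]
  have key : ∀ t : ℝ, 0 ≤ Y i i * (t * t) + (2 * Y i j) * t + Y j j := by
    intro t
    set x : Fin n → ℝ := t • (Pi.single i 1 : Fin n → ℝ) + Pi.single j 1 with hx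
    have h := hY.dotProduct_mulVec_nonneg x
    have hstar : star x = x := by
      funext k; simp
    rw [hstar] at h
    have : x ⬝ᵥ (Y *ᵥ x) = Y i i * (t * t) + (2 * Y i j) * t + Y j j := by
      rw [hx]
      simp [Matrix.mulVec_add, Matrix.mulVec_smul, add_dotProduct,
        smul_dotProduct, dotProduct_add, dotProduct_smul,
        Matrix.mulVec_single, single_dotProduct, hsym]
      ring
    rw [this] at h
    exact h
  have := discrim_le_zero key
  rw [discrim] at this
  nlinarith
lemma trace_sq_bounds {n : ℕ} {Y : Matrix (Fin n) (Fin n) ℝ} (hY : Y.PosSemidef) :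
    0 ≤ (Yᵀ * Y).trace ∧ (Yᵀ * Y).trace ≤ Y.trace ^ 2 := by
  have htr : (Yᵀ * Y).trace = ∑ i, ∑ j, Y j i * Y j i := by
    simp [Matrix.trace, Matrix.mul_apply, Matrix.diag]
  constructor
  · rw [htr]
    exact Finset.sum_nonneg fun i _ => Finset.sum_nonneg fun j _ => mul_self_nonneg _
  · rw [htr]
    have : Y.trace ^ 2 = ∑ i, ∑ j, Y j j * Y i i := by
      rw [Matrix.trace, sq, Finset.sum_mul_sum]
      simp [Matrix.diag, mul_comm]
    rw [this]
    refine Finset.sum_le_sum fun i _ => Finset.sum_le_sum fun j _ => ?_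
    have := psd_entry_sq_le hY j i
    linarith

/-- Approximation quality of the penalized SDP objective:
`0 ≤ p(Y_γ) − p(Y⋆) ≤ η²/(2γ)`. -/
theorem penalized_sdp_gap {n : ℕ} (F : Set (Matrix (Fin n) (Fin n) ℝ))
    (A : Matrix (Fin n) (Fin n) ℝ) (hA : A.IsSymm)
    (η γ : ℝ) (hη : 0 < η) (hγ : 0 < γ)
    (hF : ∀ Y ∈ F, Y.PosSemidef ∧ Y.trace = η)
    (p pγ : Matrix (Fin n) (Fin n) ℝ → ℝ)
    (hp : ∀ Y, p Y = (Yᵀ * A).trace)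
    (hpγ : ∀ Y, pγ Y = p Y + (1 / (2 * γ)) * ((Yᵀ * Y).trace - η ^ 2))
    (Ystar Yγ : Matrix (Fin n) (Fin n) ℝ)
    (hYstar : Ystar ∈ F) (hmin : ∀ Y ∈ F, p Ystar ≤ p Y)
    (hYγ : Yγ ∈ F) (hminγ : ∀ Y ∈ F, pγ Yγ ≤ pγ Y) :
    0 ≤ p Yγ - p Ystar ∧ p Yγ - p Ystar ≤ η ^ 2 / (2 * γ) := by
  obtain ⟨hs1, hs2⟩ := hF Ystar hYstar
  obtain ⟨hg1, hg2⟩ := hF Yγ hYγ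
  obtain ⟨hb1, hb2⟩ := trace_sq_bounds hs1
  obtain ⟨hc1, hc2⟩ := trace_sq_bounds hg1
  rw [hs2] at hb2
  rw [hg2] at hc2
  have h1 := hmin Yγ hYγ
  have h2 := hminγ Ystar hYstar
  rw [hpγ, hpγ] at h2
  have hcpos : 0 < 1 / (2 * γ) := by positivity
  constructor
  · linarith
  · have he : η ^ 2 / (2 * γ) = 1 / (2 * γ) * η ^ 2 := by
      field_simp
    rw [he]
    nlinarith [mul_le_mul_of_nonneg_left hb2 hcpos.le,
      mul_le_mul_of_nonneg_left hc1 hcpos.le]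
end

section
/- Let F be a set of n×n real symmetric positive semidefinite matrices, each having trace exactly η > 0, let A be an n×n real symmetric matrix, and let 0 < γ₁ < γ₂. Define p(Y) = ⟨Y, A⟩ and p_γ(Y) = p(Y) + (1/(2γ))(‖Y‖_F² − η²). If Y_{γ₁} ∈ F satisfies p_{γ₁}(Y_{γ₁}) ≤ p_{γ₁}(Y) for all Y ∈ F, and Y_{γ₂} ∈ F satisfies p_{γ₂}(Y_{γ₂}) ≤ p_{γ₂}(Y) for all Y ∈ F, then p(Y_{γ₁}) ≥ p(Y_{γ₂}). -/
open Matrix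

/-- Proposition 1(ii): the linear objective value at the minimizers of the
penalized problem `p_γ` is non-increasing in the penalty parameter γ. -/
theorem penalized_sdp_monotone {n : ℕ} (F : Set (Matrix (Fin n) (Fin n) ℝ))
    (A : Matrix (Fin n) (Fin n) ℝ) (hA : A.IsSymm)
    (η γ₁ γ₂ : ℝ) (hη : 0 < η) (hγ₁ : 0 < γ₁) (hγ₁₂ : γ₁ < γ₂)
    (hF : ∀ Y ∈ F, Y.PosSemidef ∧ Y.trace = η)
    (p : Matrix (Fin n) (Fin n) ℝ → ℝ)
    (hp : ∀ Y, p Y = (Yᵀ * A).trace)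
    (pγ : ℝ → Matrix (Fin n) (Fin n) ℝ → ℝ)
    (hpγ : ∀ γ, 0 < γ → ∀ Y, pγ γ Y = p Y + (1 / (2 * γ)) * ((Yᵀ * Y).trace - η ^ 2))
    (Y₁ Y₂ : Matrix (Fin n) (Fin n) ℝ)
    (hY₁ : Y₁ ∈ F) (hmin₁ : ∀ Y ∈ F, pγ γ₁ Y₁ ≤ pγ γ₁ Y)
    (hY₂ : Y₂ ∈ F) (hmin₂ : ∀ Y ∈ F, pγ γ₂ Y₂ ≤ pγ γ₂ Y) :
    p Y₁ ≥ p Y₂ := by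
  have hγ₂ : 0 < γ₂ := hγ₁.trans hγ₁₂
  have h1 := hmin₁ Y₂ hY₂
  have h2 := hmin₂ Y₁ hY₁
  rw [hpγ γ₁ hγ₁ Y₁, hpγ γ₁ hγ₁ Y₂] at h1
  rw [hpγ γ₂ hγ₂ Y₁, hpγ γ₂ hγ₂ Y₂] at h2
  have hc : 1 / (2 * γ₂) < 1 / (2 * γ₁) := by
    apply one_div_lt_one_div_of_lt <;> linarith
  have hc2 : 0 < 1 / (2 * γ₂) := by positivity
  nlinarith [h1, h2, hc, hc2]
end

section
/- Let A, B₁, …, B_q be n×n real symmetric matrices, b ∈ ℝ^q, γ > 0 and η > 0. For u ∈ ℝ^q set C(u) := −A − Σ_{i=1}^q uᵢBᵢ, and let P be the positive part of C(u), i.e. P is PSD, P − C(u) is PSD, and ⟨P, P − C(u)⟩ = 0. Then for every n×n real symmetric positive semidefinite matrix Y with ⟨Y, Bᵢ⟩ = bᵢ for i = 1,…,q and trace(Y) = η, one has ⟨Y, A⟩ ≥ −(γ/2)‖P‖_F² − uᵀb − η²/(2γ). That is, the dual function value d_γ(u) := −(γ/2)‖(C(u))₊‖_F² − uᵀb − η²/(2γ)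 is a lower bound on the optimal value of the SDP minimizing ⟨Y, A⟩ over this feasible set, for every u and every γ > 0. -/
open Matrix

lemma trace_mul_psd_nonneg {n : ℕ} {X Z : Matrix (Fin n) (Fin n) ℝ}
    (hX : X.PosSemidef) (hZ : Z.PosSemidef) : 0 ≤ (X * Z).trace := by
  open MatrixOrder in
  obtain ⟨S, rfl⟩ := CStarAlgebra.nonneg_iff_eq_star_mul_self.mp hX.nonneg
  rw [star_eq_conjTranspose, Matrix.mul_assoc, trace_mul_comm]
  exact (hZ.mul_mul_conjTranspose_same S).trace_nonneg

lemma trace_transpose_mul_self_nonneg {n : ℕ} (M : Matrix (Fin n) (Fin n) ℝ) :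
    0 ≤ (Mᵀ * M).trace := by
  rw [Matrix.trace]
  refine Finset.sum_nonneg fun i _ => ?_
  rw [Matrix.diag_apply, Matrix.mul_apply]
  exact Finset.sum_nonneg fun j _ => by simpa using mul_self_nonneg (M j i)

/-- Proposition 3: weak duality — for every dual variable `u` and every γ > 0,
the dual function value `d_γ(u) = −(γ/2)‖(C(u))₊‖_F² − uᵀb − η²/(2γ)` is a lower bound on
the SDP objective `⟨Y, A⟩` over the feasible set. -/
theorem sdp_dual_lower_bound {n q : ℕ}
    (A : Matrix (Fin n) (Fin n) ℝ) (hA : A.IsSymm)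
    (B : Fin q → Matrix (Fin n) (Fin n) ℝ) (hB : ∀ i, (B i).IsSymm)
    (b : Fin q → ℝ) (γ η : ℝ) (hγ : 0 < γ) (hη : 0 < η)
    (u : Fin q → ℝ) (P : Matrix (Fin n) (Fin n) ℝ)
    (hP : P.PosSemidef)
    (hPC : (P - (-A - ∑ i, u i • B i)).PosSemidef)
    (horth : (Pᵀ * (P - (-A - ∑ i, u i • B i))).trace = 0) :
    ∀ Y : Matrix (Fin n) (Fin n) ℝ, Y.PosSemidef →
      (∀ i, (Yᵀ * B i).trace = b i) → Y.trace = η →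
      (Yᵀ * A).trace ≥ -(γ / 2) * (Pᵀ * P).trace - (∑ i, u i * b i) - η ^ 2 / (2 * γ) := by
  intro Y hY hYB hYtr
  have hYT : Yᵀ = Y := (show Y.IsSymm by simpa using hY.1)
  have hPT : Pᵀ = P := (show P.IsSymm by simpa using hP.1)
  rw [hYT] at hYB ⊢
  rw [hPT]
  -- fact 1: ⟨Y, P - C⟩ ≥ 0
  have h0 : 0 ≤ (Y * (P - (-A - ∑ i, u i • B i))).trace := trace_mul_psd_nonneg hY hPC
  have hexp : (Y * (P - (-A - ∑ i, u i • B i))).trace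
      = (Y * P).trace + (Y * A).trace + ∑ i, u i * b i := by
    simp only [Matrix.mul_sub, Matrix.mul_neg, Matrix.mul_sum, Matrix.mul_smul,
      trace_sub, trace_neg, trace_sum, trace_smul, smul_eq_mul]
    simp only [hYB]
    ring
  -- fact 2: Young inequality from ‖γP − Y‖² ≥ 0
  have hq : 0 ≤ ((γ • P - Y)ᵀ * (γ • P - Y)).trace := trace_transpose_mul_self_nonneg _
  have hq' : 0 ≤ γ * γ * (P * P).trace - 2 * γ * (Y * P).trace + (Y * Y).trace := by
    have e : ((γ • P - Y)ᵀ * (γ • P - Y)).trace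
        = γ * γ * (P * P).trace - 2 * γ * (Y * P).trace + (Y * Y).trace := by
      rw [transpose_sub, transpose_smul, hYT, hPT]
      rw [Matrix.sub_mul, Matrix.mul_sub, Matrix.mul_sub, Matrix.smul_mul, Matrix.mul_smul,
        Matrix.smul_mul]
      simp only [Matrix.mul_smul, trace_sub, trace_smul, smul_eq_mul, smul_smul]
      rw [trace_mul_comm P Y]
      ring
    linarith [e ▸ hq]
  -- fact 3: trace(Y²) ≤ η²
  have hsym : ∀ i j, Y j i = Y i j := fun i j => by
    conv_lhs => rw [← hYT]
    rfl
  have htY : (Y * Y).trace ≤ η ^ 2 := by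
    have e1 : (Y * Y).trace = ∑ i, ∑ j, Y i j * Y j i := by
      simp [Matrix.trace, Matrix.mul_apply, Matrix.diag]
    have e2 : η ^ 2 = ∑ i, ∑ j, Y i i * Y j j := by
      rw [← hYtr, Matrix.trace, sq, Finset.sum_mul_sum]
      rfl
    rw [e1, e2]
    refine Finset.sum_le_sum fun i _ => Finset.sum_le_sum fun j _ => ?_
    rw [hsym i j]
    exact psd_entry_sq_le hY i j
  -- combine
  have h2γ : (0:ℝ) < 2 * γ := by linarith
  have hYP : (Y * P).trace ≤ γ / 2 * (P * P).trace + η ^ 2 / (2 * γ) := by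
    rw [← mul_le_mul_iff_right₀ h2γ]
    have e : (2 * γ) * (γ / 2 * (P * P).trace + η ^ 2 / (2 * γ))
        = γ * γ * (P * P).trace + η ^ 2 := by
      field_simp
    rw [e]
    nlinarith [hq', htY]
  linarith [hexp ▸ h0, hYP]
end

section
/- Let A, B₁, …, B_q be n×n real symmetric matrices, b ∈ ℝ^q and γ > 0, and for u ∈ ℝ^q set C(u) := −A − Σ_{i=1}^q uᵢBᵢ. Let u⋆ ∈ ℝ^q and let P⋆ be the positive part of C(u⋆) (P⋆ is PSD, P⋆ − C(u⋆) is PSD, ⟨P⋆, P⋆ − C(u⋆)⟩ = 0). Suppose the stationarity conditions γ⟨P⋆, Bᵢ⟩ = bᵢ hold for i = 1,…,q. Then Y⋆ := γP⋆ is positive semidefinite, satisfies ⟨Y⋆, Bᵢ⟩ = bᵢ for all i, and for every η > 0 and every positive semidefinite Y with ⟨Y, Bᵢ⟩ = bᵢ for all i and trace(Y) = η one has p_γ(Y⋆) ≤ p_γ(Y), where p_γ(Y) := ⟨Y, A⟩ + (1/(2γ))(‖Y‖_F² − η²). In other words, the primal optimal solution of the penalized SDP is recovered from the dual optimum by Y⋆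 = γ(C(u⋆))₊. -/
open Matrix

lemma psd_trace_nonneg {n : ℕ} {M : Matrix (Fin n) (Fin n) ℝ} (hM : M.PosSemidef) :
    0 ≤ M.trace := by
  rw [Matrix.trace]
  refine Finset.sum_nonneg fun i _ => ?_
  simpa using hM.2 (Finsupp.single i 1)

lemma psd_trace_mul_nonneg {n : ℕ} {X Y : Matrix (Fin n) (Fin n) ℝ}
    (hX : X.PosSemidef) (hY : Y.PosSemidef) : 0 ≤ (X * Y).trace := by
  open scoped MatrixOrder in
  obtain ⟨C, rfl⟩ := CStarAlgebra.nonneg_iff_eq_star_mul_self.mp hX.nonneg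
  rw [Matrix.star_eq_conjTranspose]
  rw [Matrix.mul_assoc, Matrix.trace_mul_comm]
  exact psd_trace_nonneg ((hY.mul_mul_conjTranspose_same C))

lemma trace_transpose_mul_comm {n : ℕ} (X Y : Matrix (Fin n) (Fin n) ℝ) :
    (Xᵀ * Y).trace = (Yᵀ * X).trace := by
  rw [← Matrix.trace_transpose (Yᵀ * X), Matrix.transpose_mul, Matrix.transpose_transpose]

/-- if the dual stationarity conditions `γ⟨(C(u⋆))₊, Bᵢ⟩ = bᵢ` hold, then
`Y⋆ := γ(C(u⋆))₊` is PSD, feasible for the linear constraints, and minimizes the penalized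
objective `p_γ` over the feasible set. -/
theorem sdp_primal_from_dual {n q : ℕ}
    (A : Matrix (Fin n) (Fin n) ℝ) (hA : A.IsSymm)
    (B : Fin q → Matrix (Fin n) (Fin n) ℝ) (hB : ∀ i, (B i).IsSymm)
    (b : Fin q → ℝ) (γ : ℝ) (hγ : 0 < γ)
    (ustar : Fin q → ℝ) (Pstar : Matrix (Fin n) (Fin n) ℝ)
    (hP : Pstar.PosSemidef)
    (hPC : (Pstar - (-A - ∑ i, ustar i • B i)).PosSemidef)
    (horth : (Pstarᵀ * (Pstar - (-A - ∑ i, ustar i • B i))).trace = 0)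
    (hstat : ∀ i, γ * (Pstarᵀ * B i).trace = b i) :
    (γ • Pstar).PosSemidef ∧
    (∀ i, ((γ • Pstar)ᵀ * B i).trace = b i) ∧
    (∀ η : ℝ, 0 < η → ∀ Y : Matrix (Fin n) (Fin n) ℝ, Y.PosSemidef →
      (∀ i, (Yᵀ * B i).trace = b i) → Y.trace = η →
      ((γ • Pstar)ᵀ * A).trace + (1 / (2 * γ)) * (((γ • Pstar)ᵀ * (γ • Pstar)).trace - η ^ 2)
        ≤ (Yᵀ * A).trace + (1 / (2 * γ)) * ((Yᵀ * Y).trace - η ^ 2)) := by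
  set S := ∑ i, ustar i • B i with hS
  have hsum : ∀ Z : Matrix (Fin n) (Fin n) ℝ,
      (Zᵀ * S).trace = ∑ i, ustar i * (Zᵀ * B i).trace := by
    intro Z
    simp [hS, Matrix.mul_sum, Matrix.mul_smul, Matrix.trace_sum, smul_eq_mul]
  refine ⟨⟨by rw [Matrix.IsHermitian, Matrix.conjTranspose_smul, star_trivial, hP.1.eq], fun x => ?_⟩, ?_, ?_⟩
  · rw [show (x.sum fun i xi => x.sum fun j xj => star xi * (γ • Pstar) i j * xj)
        = γ * (x.sum fun i xi => x.sum fun j xj => star xi * Pstar i j * xj) by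
      simp only [Finsupp.sum, Finset.mul_sum, Matrix.smul_apply, smul_eq_mul]
      exact Finset.sum_congr rfl fun _ _ => Finset.sum_congr rfl fun _ _ => by ring]
    exact mul_nonneg hγ.le (hP.2 x)
  · intro i
    rw [Matrix.transpose_smul, Matrix.smul_mul, Matrix.trace_smul, smul_eq_mul, hstat i]
  · intro η hη Y hY hfeas htr
    have hCeq : Pstar - (-A - S) = Pstar + A + S := by abel
    have hPS : γ * (Pstarᵀ * S).trace = ∑ i, ustar i * b i := by
      rw [hsum, Finset.mul_sum]
      exact Finset.sum_congr rfl fun i _ => by rw [← hstat i]; ring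
    have hYS : (Yᵀ * S).trace = ∑ i, ustar i * b i := by
      rw [hsum]
      exact Finset.sum_congr rfl fun i _ => by rw [hfeas i]
    have h3 : γ * (Pstarᵀ * Pstar).trace + γ * (Pstarᵀ * A).trace
        + (∑ i, ustar i * b i) = 0 := by
      have h := horth
      rw [hCeq, Matrix.mul_add, Matrix.mul_add, Matrix.trace_add, Matrix.trace_add] at h
      rw [← hPS]
      nlinarith [h]
    have hYt : Yᵀ = Y := by
      have h := hY.1
      rwa [Matrix.IsHermitian, Matrix.conjTranspose_eq_transpose_of_trivial] at h
    have h2 : 0 ≤ (Yᵀ * Pstar).trace + (Yᵀ * A).trace + (∑ i, ustar i * b i) := by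
      have h0 : 0 ≤ (Y * (Pstar - (-A - S))).trace := psd_trace_mul_nonneg hY hPC
      rw [hCeq, Matrix.mul_add, Matrix.mul_add, Matrix.trace_add, Matrix.trace_add,
        ← hYt, hYS] at h0
      exact h0
    have h1 : 0 ≤ (Yᵀ * Y).trace - 2 * γ * (Yᵀ * Pstar).trace
        + γ ^ 2 * (Pstarᵀ * Pstar).trace := by
      have h0 : 0 ≤ ((Y - γ • Pstar)ᵀ * (Y - γ • Pstar)).trace := by
        have h := Matrix.posSemidef_conjTranspose_mul_self (Y - γ • Pstar)
        rw [Matrix.conjTranspose_eq_transpose_of_trivial] at h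
        exact psd_trace_nonneg h
      have hsymm : (Pstarᵀ * Y).trace = (Yᵀ * Pstar).trace := trace_transpose_mul_comm Pstar Y
      simp only [Matrix.transpose_sub, Matrix.transpose_smul, Matrix.sub_mul, Matrix.mul_sub,
        Matrix.smul_mul, Matrix.mul_smul, Matrix.trace_sub, Matrix.trace_smul,
        smul_eq_mul, hsymm] at h0
      nlinarith [h0]
    have hgL1 : ((γ • Pstar)ᵀ * A).trace = γ * (Pstarᵀ * A).trace := by
      rw [Matrix.transpose_smul, Matrix.smul_mul, Matrix.trace_smul, smul_eq_mul]
    have hgL2 : ((γ • Pstar)ᵀ * (γ • Pstar)).trace = γ ^ 2 * (Pstarᵀ * Pstar).trace := by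
      rw [Matrix.transpose_smul, Matrix.smul_mul, Matrix.mul_smul, Matrix.trace_smul,
        Matrix.trace_smul, smul_eq_mul, smul_eq_mul]; ring
    rw [hgL1, hgL2]
    have hne : (2 * γ) ≠ 0 := by positivity
    rw [← sub_nonneg]
    have hkey : ((Yᵀ * A).trace + 1 / (2 * γ) * ((Yᵀ * Y).trace - η ^ 2))
        - (γ * (Pstarᵀ * A).trace
          + 1 / (2 * γ) * (γ ^ 2 * (Pstarᵀ * Pstar).trace - η ^ 2))
        = (2 * γ * (Yᵀ * A).trace + (Yᵀ * Y).trace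
            - 2 * γ ^ 2 * (Pstarᵀ * A).trace - γ ^ 2 * (Pstarᵀ * Pstar).trace) / (2 * γ) := by
      field_simp
      ring
    rw [hkey]
    apply div_nonneg _ (by positivity)
    nlinarith [h1, h2, h3, mul_nonneg (by positivity : (0:ℝ) ≤ 2 * γ) h2]
end

section
/- Let N, L ≥ 1, let ψ : Fin N → Fin L → ℝ, and let K be an N×N real symmetric matrix. For a labeling x : Fin N → Fin L define the indicator matrix X ∈ ℝ^{N×L} by X_{i,l} = 1 if x(i) = l and X_{i,l} = 0 otherwise, and let H ∈ ℝ^{N×L} with H_{i,l} = ψ(i)(l). Then Σ_{i} ψ(i)(x(i)) + Σ_{i<j} [x(i) ≠ x(j)]·K_{i,j} = ⟨H, X⟩ − (1/2)⟨XXᵀ, K⟩ + (1/2)·𝟏ᵀK𝟏, where [x(i) ≠ x(j)] is 1 if x(i) ≠ x(j) and 0 otherwise, and 𝟏 ∈ ℝ^N is the all-ones vector. -/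
open Matrix

private lemma strict_sum_half {n : ℕ} (f : Fin n → Fin n → ℝ)
    (hsymm : ∀ i j, f i j = f j i) (hdiag : ∀ i, f i i = 0) :
    (∑ i, ∑ j, if i < j then f i j else 0) = (1/2) * ∑ i, ∑ j, f i j := by
  have key : (∑ i, ∑ j, f i j)
      = (∑ i, ∑ j, if i < j then f i j else 0)
        + (∑ i, ∑ j, if j < i then f i j else 0) := by
    rw [← Finset.sum_add_distrib]
    congr 1; ext i
    rw [← Finset.sum_add_distrib]
    congr 1; ext j
    rcases lt_trichotomy i j with h | h | h
    · simp [h, not_lt.mpr h.le]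
    · simp [h, hdiag]
    · simp [h, not_lt.mpr h.le]
  have swap : (∑ i, ∑ j, if j < i then f i j else 0)
      = (∑ i, ∑ j, if i < j then f i j else 0) := by
    rw [Finset.sum_comm]
    congr 1; ext i; congr 1; ext j
    by_cases h : i < j <;> simp [h, hsymm]
  rw [swap] at key
  linarith

/-- the Potts-model CRF energy equals
`⟨H, X⟩ − (1/2)⟨XXᵀ, K⟩ + (1/2)𝟏ᵀK𝟏` for the 0/1 indicator matrix `X` of the labeling. -/
theorem potts_energy_quadratic_form {N L : ℕ} (hN : 1 ≤ N) (hL : 1 ≤ L)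
    (ψ : Fin N → Fin L → ℝ) (K : Matrix (Fin N) (Fin N) ℝ) (hK : K.IsSymm)
    (x : Fin N → Fin L)
    (X : Matrix (Fin N) (Fin L) ℝ) (hX : ∀ i l, X i l = if x i = l then 1 else 0)
    (H : Matrix (Fin N) (Fin L) ℝ) (hH : ∀ i l, H i l = ψ i l) :
    (∑ i, ψ i (x i)) + (∑ i, ∑ j, if i < j then (if x i ≠ x j then K i j else 0) else 0)
      = (Hᵀ * X).trace - (1 / 2) * ((X * Xᵀ)ᵀ * K).trace
        + (1 / 2) * (∑ i, ∑ j, K i j) := by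
  have hKsym : ∀ i j, K i j = K j i := fun i j => (congrFun (congrFun hK.symm j) i).symm
  have htr1 : (Hᵀ * X).trace = ∑ i, ψ i (x i) := by
    simp only [Matrix.trace, Matrix.diag, Matrix.mul_apply, Matrix.transpose_apply, hX, hH]
    rw [Finset.sum_comm]
    congr 1; ext i
    simp [Finset.sum_ite_eq']
  have hXX : ∀ i j : Fin N, (X * Xᵀ) i j = if x i = x j then 1 else 0 := by
    intro i j
    simp only [Matrix.mul_apply, Matrix.transpose_apply, hX]
    by_cases h : x i = x j
    · simp [h, Finset.sum_ite_eq', ite_and]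
    · rw [Finset.sum_eq_zero, if_neg h]
      intro l _
      by_cases h1 : x i = l
      · have h2 : ¬ x j = l := fun hc => h (h1.trans hc.symm)
        simp [h1, h2]
      · simp [h1]
  have htr2 : ((X * Xᵀ)ᵀ * K).trace = ∑ i, ∑ j, (if x i = x j then K i j else 0) := by
    simp only [Matrix.trace, Matrix.diag, Matrix.mul_apply, Matrix.transpose_apply, hXX]
    congr 1; ext i; congr 1; ext j
    by_cases h : x j = x i
    · rw [if_pos h, if_pos h.symm, one_mul, hKsym i j]
    · rw [if_neg h, if_neg (fun hc => h hc.symm), zero_mul]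
  have hhalf := strict_sum_half (fun i j => if x i ≠ x j then K i j else 0)
    (by intro i j
        show (if x i ≠ x j then K i j else 0) = (if x j ≠ x i then K j i else 0)
        by_cases h : x i = x j
        · rw [if_neg (not_not.mpr h), if_neg (not_not.mpr h.symm)]
        · rw [if_pos h, if_pos (fun hc => h hc.symm), hKsym i j])
    (by intro i; show (if x i ≠ x i then K i i else 0) = 0; simp)
  rw [htr1, htr2, hhalf]
  have split : ∀ i j : Fin N,
      (if x i ≠ x j then K i j else 0) = K i j - (if x i = x j then K i j else 0) := by
    intro i j; by_cases h : x i = x j <;> simp [h]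
  simp only [split, Finset.sum_sub_distrib]
  ring
end

section
/- Let N, L ≥ 1, let ψ : Fin N → Fin L → ℝ, let K be an N×N real symmetric matrix, and let μ : Fin L → Fin L → ℝ satisfy μ(l, l′) = μ(l′, l) for all l, l′ and μ(l, l) = 0 for all l. For a labeling x : Fin N → Fin L define y ∈ ℝ^{Fin L × Fin N} by y_{(l,i)} = 1 if x(i) = l and 0 otherwise, define h ∈ ℝ^{Fin L × Fin N} by h_{(l,i)} = ψ(i)(l), and let U be the L×L matrix with U_{l,l′} = μ(l, l′) − 1. Then Σ_i ψ(i)(x(i)) + Σ_{i<j} μ(x(i), x(j))·K_{i,j} = hᵀy + (1/2)·yᵀ(U ⊗ K)y + (1/2)·𝟏ᵀK𝟏, where U ⊗ K denotes the Kronecker product, indexed so that (U ⊗ K)_{(l,i),(l′,j)} = U_{l,l′}·K_{i,j}, and 𝟏 ∈ ℝ^N is the all-ones vector. -/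
open Matrix Kronecker

lemma sum_lt_double {N : ℕ} (f : Fin N → Fin N → ℝ)
    (hsym : ∀ i j, f i j = f j i) (hdiag : ∀ i, f i i = 0) :
    ∑ i, ∑ j, f i j = 2 * ∑ i, ∑ j, (if i < j then f i j else 0) := by
  have key : ∀ i j : Fin N, f i j =
      (if i < j then f i j else 0) + (if j < i then f j i else 0) := by
    intro i j
    rcases lt_trichotomy i j with h | h | h
    · simp [h, not_lt_of_gt h]
    · subst h; simp [hdiag]
    · simp [h, not_lt_of_gt h, hsym]
  calc ∑ i, ∑ j, f i j
      = ∑ i, ∑ j, ((if i < j then f i j else 0) + (if j < i then f j i else 0)) := by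
        simp_rw [← key]
    _ = (∑ i, ∑ j, (if i < j then f i j else 0)) +
        (∑ i, ∑ j, (if j < i then f j i else 0)) := by
        rw [← Finset.sum_add_distrib]; simp [Finset.sum_add_distrib]
    _ = 2 * ∑ i, ∑ j, (if i < j then f i j else 0) := by
        rw [Finset.sum_comm (f := fun i j => if j < i then f j i else 0)]; ring

/-- for a general symmetric label compatibility function μ vanishing on the
diagonal, the CRF energy equals `hᵀy + (1/2)yᵀ(U ⊗ K)y + (1/2)𝟏ᵀK𝟏` where
`U = [μ(l,l′) − 1]` and `y` is the vectorized 0/1 indicator of the labeling. -/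
theorem general_compatibility_energy_quadratic_form {N L : ℕ} (hN : 1 ≤ N) (hL : 1 ≤ L)
    (ψ : Fin N → Fin L → ℝ) (K : Matrix (Fin N) (Fin N) ℝ) (hK : K.IsSymm)
    (μ : Fin L → Fin L → ℝ)
    (hμsymm : ∀ l l', μ l l' = μ l' l) (hμdiag : ∀ l, μ l l = 0)
    (x : Fin N → Fin L)
    (y : Fin L × Fin N → ℝ) (hy : ∀ l i, y (l, i) = if x i = l then 1 else 0)
    (h : Fin L × Fin N → ℝ) (hh : ∀ l i, h (l, i) = ψ i l)
    (U : Matrix (Fin L) (Fin L) ℝ) (hU : ∀ l l', U l l' = μ l l' - 1) :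
    (∑ i, ψ i (x i)) + (∑ i, ∑ j, if i < j then μ (x i) (x j) * K i j else 0)
      = h ⬝ᵥ y + (1 / 2) * (y ⬝ᵥ ((U ⊗ₖ K) *ᵥ y)) + (1 / 2) * (∑ i, ∑ j, K i j) := by
  have hy' : y = fun p => if x p.2 = p.1 then 1 else 0 := by
    funext p; cases p; exact hy _ _
  have hh' : h = fun p => ψ p.2 p.1 := by
    funext p; cases p; exact hh _ _
  have h1 : h ⬝ᵥ y = ∑ i, ψ i (x i) := by
    simp only [dotProduct, hy', hh', Fintype.sum_prod_type, mul_ite, mul_one, mul_zero]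
    rw [Finset.sum_comm]
    simp [eq_comm]
  have hv : ∀ p : Fin L × Fin N, ((U ⊗ₖ K) *ᵥ y) p = ∑ j, U p.1 (x j) * K p.2 j := by
    intro p
    simp only [mulVec, dotProduct, Fintype.sum_prod_type, kroneckerMap_apply, hy',
      mul_ite, mul_one, mul_zero]
    rw [Finset.sum_comm]
    simp [Finset.sum_ite_eq]
  have h2 : y ⬝ᵥ ((U ⊗ₖ K) *ᵥ y) = ∑ i, ∑ j, (μ (x i) (x j) - 1) * K i j := by
    simp only [dotProduct, hv]
    simp only [hy', Fintype.sum_prod_type, ite_mul, one_mul, zero_mul]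
    rw [Finset.sum_comm]
    simp [Finset.sum_ite_eq, hU]
  have h3 : ∑ i, ∑ j, (μ (x i) (x j) - 1) * K i j
      = (∑ i, ∑ j, μ (x i) (x j) * K i j) - ∑ i, ∑ j, K i j := by
    simp_rw [sub_mul, one_mul, Finset.sum_sub_distrib]
  have h4 := sum_lt_double (fun i j => μ (x i) (x j) * K i j)
    (fun i j => by show μ (x i) (x j) * K i j = μ (x j) (x i) * K j i; rw [hμsymm, hK.apply]) (fun i => by simp [hμdiag])
  rw [h1, h2, h3, h4]
  ring
end

section
/- Let Φ be an N×D real matrix, c > 0, and let Ω := I_N − (1/N)·𝟏𝟏ᵀ be the centering projection matrix (𝟏 ∈ ℝ^N the all-ones vector). Define S := Ω·Φ·(c·I_D + ΦᵀΦ)⁻¹·Φᵀ·Ω. Then Ω·(c·I_N + ΦΦᵀ)⁻¹·Ω = (1/c)·(Ω − S); moreover S is symmetric positive semidefinite and satisfies S·𝟏 = 0. -/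
open Matrix

/-- with the centering projection `Ω = I − (1/N)𝟏𝟏ᵀ` and
`S = ΩΦ(cI_D + ΦᵀΦ)⁻¹ΦᵀΩ`, one has `Ω(cI_N + ΦΦᵀ)⁻¹Ω = (1/c)(Ω − S)`; moreover `S` is
symmetric PSD and `S𝟏 = 0`. -/
theorem centered_woodbury {N D : ℕ} (hN : 0 < N)
    (Φ : Matrix (Fin N) (Fin D) ℝ) (c : ℝ) (hc : 0 < c)
    (Ω : Matrix (Fin N) (Fin N) ℝ)
    (hΩ : Ω = 1 - (N : ℝ)⁻¹ • Matrix.of (fun _ _ : Fin N => (1 : ℝ)))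
    (S : Matrix (Fin N) (Fin N) ℝ)
    (hS : S = Ω * Φ * (c • (1 : Matrix (Fin D) (Fin D) ℝ) + Φᵀ * Φ)⁻¹ * Φᵀ * Ω) :
    Ω * (c • (1 : Matrix (Fin N) (Fin N) ℝ) + Φ * Φᵀ)⁻¹ * Ω = (1 / c) • (Ω - S) ∧
    S.PosSemidef ∧ S *ᵥ (fun _ => 1) = 0 := by
  set B : Matrix (Fin D) (Fin D) ℝ := c • (1 : Matrix (Fin D) (Fin D) ℝ) + Φᵀ * Φ with hB
  set A : Matrix (Fin N) (Fin N) ℝ := c • (1 : Matrix (Fin N) (Fin N) ℝ) + Φ * Φᵀ with hA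
  -- positive definiteness
  have hsmul1 : ∀ {m : ℕ}, (c • (1 : Matrix (Fin m) (Fin m) ℝ)).PosDef := by
    intro m
    rw [smul_one_eq_diagonal]
    exact Matrix.PosDef.diagonal (fun _ => hc)
  have hBpd : B.PosDef := hsmul1.add_posSemidef (by
    simpa using Matrix.posSemidef_conjTranspose_mul_self Φ)
  have hApd : A.PosDef := hsmul1.add_posSemidef (by
    simpa using Matrix.posSemidef_self_mul_conjTranspose Φ)
  have hBinv := hBpd.isUnit.invertible
  have hAinv := hApd.isUnit.invertible
  -- push-through identity
  have hpush : A * Φ = Φ * B := by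
    simp [hA, hB, Matrix.mul_add, Matrix.add_mul, Matrix.mul_smul, Matrix.smul_mul,
      Matrix.mul_assoc]
  -- Woodbury: A⁻¹ = (1/c) • (1 - Φ B⁻¹ Φᵀ)
  have hwood : A⁻¹ = (1 / c) • ((1 : Matrix (Fin N) (Fin N) ℝ) - Φ * B⁻¹ * Φᵀ) := by
    have key : A * ((1 / c) • ((1 : Matrix (Fin N) (Fin N) ℝ) - Φ * B⁻¹ * Φᵀ)) = 1 := by
      have h1 : A * (Φ * B⁻¹ * Φᵀ) = Φ * Φᵀ := by
        calc A * (Φ * B⁻¹ * Φᵀ) = (A * Φ) * B⁻¹ * Φᵀ := by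
              simp [Matrix.mul_assoc]
          _ = Φ * (B * B⁻¹) * Φᵀ := by rw [hpush]; simp [Matrix.mul_assoc]
          _ = Φ * Φᵀ := by rw [Matrix.mul_inv_of_invertible]; simp
      rw [Matrix.mul_smul, Matrix.mul_sub, h1, hA]
      simp [smul_smul, one_div, inv_mul_cancel₀ hc.ne']
    calc A⁻¹ = A⁻¹ * (A * ((1 / c) • ((1 : Matrix (Fin N) (Fin N) ℝ) - Φ * B⁻¹ * Φᵀ))) := by
          rw [key]; simp
      _ = (1 / c) • ((1 : Matrix (Fin N) (Fin N) ℝ) - Φ * B⁻¹ * Φᵀ) := by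
          rw [← Matrix.mul_assoc, Matrix.inv_mul_of_invertible, Matrix.one_mul]
  -- properties of Ω
  have hΩsymm : Ωᵀ = Ω := by
    rw [hΩ]; ext i j; simp [Matrix.transpose_apply, Matrix.one_apply, eq_comm]
  have hNne : (N : ℝ) ≠ 0 := Nat.cast_ne_zero.mpr hN.ne'
  set J : Matrix (Fin N) (Fin N) ℝ := Matrix.of (fun _ _ : Fin N => (1 : ℝ)) with hJ
  have hJJ : J * J = (N : ℝ) • J := by
    ext i j
    simp [hJ, Matrix.mul_apply]
  have hΩidem : Ω * Ω = Ω := by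
    rw [hΩ]
    have expand : ((1 : Matrix (Fin N) (Fin N) ℝ) - (N : ℝ)⁻¹ • J) *
        ((1 : Matrix (Fin N) (Fin N) ℝ) - (N : ℝ)⁻¹ • J)
        = 1 - (N : ℝ)⁻¹ • J - (N : ℝ)⁻¹ • J + ((N : ℝ)⁻¹ * (N : ℝ)⁻¹) • (J * J) := by
      simp only [Matrix.mul_sub, Matrix.sub_mul, Matrix.mul_one, Matrix.one_mul,
        Matrix.smul_mul, Matrix.mul_smul, smul_smul, smul_sub]
      abel
    rw [expand, hJJ, smul_smul]
    have : (N : ℝ)⁻¹ * (N : ℝ)⁻¹ * (N : ℝ) = (N : ℝ)⁻¹ := by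
      field_simp
    rw [this]
    abel
  have hΩone : Ω *ᵥ (fun _ => (1 : ℝ)) = 0 := by
    rw [hΩ]
    funext i
    simp [Matrix.mulVec, dotProduct, Matrix.sub_apply, Matrix.one_apply, hJ,
      Finset.sum_sub_distrib, Finset.sum_ite_eq', Finset.sum_const, Finset.card_univ,
      nsmul_eq_mul, mul_inv_cancel₀ hNne, inv_mul_cancel₀ hNne]
  refine ⟨?_, ?_, ?_⟩
  · rw [hwood, hS]
    rw [Matrix.mul_smul, Matrix.smul_mul]
    congr 1
    rw [Matrix.mul_sub, Matrix.sub_mul, Matrix.mul_one, hΩidem]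
    congr 1
    simp [Matrix.mul_assoc]
  · rw [hS]
    have : Ω * Φ * B⁻¹ * Φᵀ * Ω = (Φᵀ * Ω)ᴴ * B⁻¹ * (Φᵀ * Ω) := by
      have hΩH : Ωᴴ = Ω := by
        ext i j
        have := congrFun (congrFun hΩsymm i) j
        simpa [Matrix.conjTranspose_apply, Matrix.transpose_apply] using this
      have hΦH : (Φᵀ)ᴴ = Φ := by
        ext i j
        simp [Matrix.conjTranspose_apply]
      have : (Φᵀ * Ω)ᴴ = Ω * Φ := by
        rw [Matrix.conjTranspose_mul, hΩH, hΦH]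
      rw [this]
      simp [Matrix.mul_assoc]
    rw [this]
    exact (hBpd.inv.posSemidef).conjTranspose_mul_mul_same _
  · rw [hS]
    rw [← Matrix.mulVec_mulVec, hΩone]
    simp [Matrix.mulVec_zero]
end
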